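/- For the nonlinear planar ODE u' = -v - u(1/4 - u² - v²), v' = u - v(1/4 - u² - v²): every solution starting on the unit circle u² + v² = 1 reaches a state with u² + v² ≥ 2 at some finite time within its maximal existence interval. -/

import Mathlib

open scoped ENNReal
open Real Set

noncomputable def Wfun (t : ℝ) : ℝ := 4 - 3 * Real.exp (t / 2)
noncomputable def Rfun (t : ℝ) : ℝ := (Wfun t)⁻¹

lemma Wfun_pos {t : ℝ} (h : t < 2 * Real.log (4 / 3)) : 0 < Wfun t := by
  have h1 : Real.exp (t / 2) < 4 / 3 := by
    have := Real.exp_lt_exp.mpr (show t / 2 < Real.log (4 / 3) by linarith)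
    rwa [Real.exp_log (by norm_num)] at this
  unfold Wfun; linarith

lemma Rfun_pos {t : ℝ} (h : t < 2 * Real.log (4 / 3)) : 0 < Rfun t :=
  inv_pos.mpr (Wfun_pos h)

lemma Wfun_hasDeriv (t : ℝ) : HasDerivAt Wfun (-(3 / 2) * Real.exp (t / 2)) t := by
  have h1 : HasDerivAt (fun s : ℝ => s / 2) (1 / 2) t := (hasDerivAt_id t).div_const 2
  have h2 := (Real.hasDerivAt_exp (t / 2)).comp t h1
  have h3 := (h2.const_mul (3 : ℝ)).const_sub 4
  refine h3.congr_deriv ?_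
  ring

lemma Rfun_hasDeriv {t : ℝ} (h : t < 2 * Real.log (4 / 3)) :
    HasDerivAt Rfun (2 * Rfun t * (Rfun t - 1 / 4)) t := by
  have hw := Wfun_pos h
  have h1 := (Wfun_hasDeriv t).inv hw.ne'
  refine h1.congr_deriv ?_
  have hne : Wfun t ≠ 0 := hw.ne'
  have hwdef : Wfun t = 4 - 3 * Real.exp (t / 2) := rfl
  simp only [Rfun]
  field_simp
  nlinarith [hwdef]

noncomputable def rho (t : ℝ) : ℝ := Real.sqrt (Rfun t)

lemma rho_sq {t : ℝ} (h : t < 2 * Real.log (4 / 3)) : rho t ^ 2 = Rfun t :=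
  Real.sq_sqrt (Rfun_pos h).le

lemma rho_hasDeriv {t : ℝ} (h : t < 2 * Real.log (4 / 3)) :
    HasDerivAt rho (rho t * (Rfun t - 1 / 4)) t := by
  have hR := Rfun_pos h
  have h1 := (Real.hasDerivAt_sqrt hR.ne').comp t (Rfun_hasDeriv h)
  refine h1.congr_deriv ?_
  have hs : Real.sqrt (Rfun t) ^ 2 = Rfun t := Real.sq_sqrt hR.le
  have hs0 : Real.sqrt (Rfun t) ≠ 0 := (Real.sqrt_pos.mpr hR).ne'
  simp only [rho]
  field_simp
  nlinarith [hs]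

noncomputable def Ufun (c0 s0 t : ℝ) : ℝ := rho t * (c0 * Real.cos t - s0 * Real.sin t)
noncomputable def Vfun (c0 s0 t : ℝ) : ℝ := rho t * (s0 * Real.cos t + c0 * Real.sin t)

lemma UV_sq {c0 s0 : ℝ} (hcs : c0 ^ 2 + s0 ^ 2 = 1) {t : ℝ} (h : t < 2 * Real.log (4 / 3)) :
    Ufun c0 s0 t ^ 2 + Vfun c0 s0 t ^ 2 = Rfun t := by
  have hs := rho_sq h
  have htrig := Real.sin_sq_add_cos_sq t
  have hCS : (c0 * Real.cos t - s0 * Real.sin t) ^ 2 + (s0 * Real.cos t + c0 * Real.sin t) ^ 2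
      = 1 := by linear_combination (c0 ^ 2 + s0 ^ 2) * htrig + hcs
  simp only [Ufun, Vfun]
  linear_combination ((c0 * Real.cos t - s0 * Real.sin t) ^ 2
    + (s0 * Real.cos t + c0 * Real.sin t) ^ 2) * hs + Rfun t * hCS

lemma Ufun_hasDeriv {c0 s0 : ℝ} (hcs : c0 ^ 2 + s0 ^ 2 = 1) {t : ℝ}
    (h : t < 2 * Real.log (4 / 3)) :
    HasDerivAt (Ufun c0 s0)
      (-(Vfun c0 s0 t) - Ufun c0 s0 t * (1 / 4 - Ufun c0 s0 t ^ 2 - Vfun c0 s0 t ^ 2)) t := by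
  have hC : HasDerivAt (fun t : ℝ => c0 * Real.cos t - s0 * Real.sin t)
      (-(s0 * Real.cos t + c0 * Real.sin t)) t := by
    have := ((Real.hasDerivAt_cos t).const_mul c0).sub ((Real.hasDerivAt_sin t).const_mul s0)
    refine this.congr_deriv ?_; ring
  have h1 := (rho_hasDeriv h).mul hC
  have hsq := UV_sq hcs h
  refine h1.congr_deriv ?_
  rw [show (1 : ℝ) / 4 - Ufun c0 s0 t ^ 2 - Vfun c0 s0 t ^ 2
      = 1 / 4 - Rfun t by rw [← hsq]; ring]
  simp only [Ufun, Vfun]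
  ring

lemma Vfun_hasDeriv {c0 s0 : ℝ} (hcs : c0 ^ 2 + s0 ^ 2 = 1) {t : ℝ}
    (h : t < 2 * Real.log (4 / 3)) :
    HasDerivAt (Vfun c0 s0)
      (Ufun c0 s0 t - Vfun c0 s0 t * (1 / 4 - Ufun c0 s0 t ^ 2 - Vfun c0 s0 t ^ 2)) t := by
  have hS : HasDerivAt (fun t : ℝ => s0 * Real.cos t + c0 * Real.sin t)
      (c0 * Real.cos t - s0 * Real.sin t) t := by
    have := ((Real.hasDerivAt_cos t).const_mul s0).add ((Real.hasDerivAt_sin t).const_mul c0)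
    refine this.congr_deriv ?_; ring
  have h1 := (rho_hasDeriv h).mul hS
  have hsq := UV_sq hcs h
  refine h1.congr_deriv ?_
  rw [show (1 : ℝ) / 4 - Ufun c0 s0 t ^ 2 - Vfun c0 s0 t ^ 2
      = 1 / 4 - Rfun t by rw [← hsq]; ring]
  simp only [Ufun, Vfun]
  ring

lemma Rfun_zero : Rfun 0 = 1 := by
  simp [Rfun, Wfun]
  norm_num

lemma rho_zero : rho 0 = 1 := by
  simp [rho, Rfun_zero]

theorem nonlinear_spiral_liveness (T : ℝ≥0∞) (hT : 0 < T) (u v : ℝ → ℝ)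
    (hu : ∀ t : ℝ, 0 ≤ t → ENNReal.ofReal t < T →
      HasDerivAt u (-(v t) - u t * (1/4 - u t ^ 2 - v t ^ 2)) t)
    (hv : ∀ t : ℝ, 0 ≤ t → ENNReal.ofReal t < T →
      HasDerivAt v (u t - v t * (1/4 - u t ^ 2 - v t ^ 2)) t)
    (hmax : ∀ (T' : ℝ) (u' v' : ℝ → ℝ), u' 0 = u 0 → v' 0 = v 0 →
      (∀ t ∈ Set.Ico (0:ℝ) T',
        HasDerivAt u' (-(v' t) - u' t * (1/4 - u' t ^ 2 - v' t ^ 2)) t ∧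
        HasDerivAt v' (u' t - v' t * (1/4 - u' t ^ 2 - v' t ^ 2)) t) →
      ENNReal.ofReal T' ≤ T)
    (hinit : u 0 ^ 2 + v 0 ^ 2 = 1) :
    ∃ τ : ℝ, 0 ≤ τ ∧ ENNReal.ofReal τ < T ∧ 2 ≤ u τ ^ 2 + v τ ^ 2 := by
  have hlog : Real.log (7/6) < Real.log (4/3) := Real.log_lt_log (by norm_num) (by norm_num)
  have hlog76 : 0 < Real.log (7/6) := Real.log_pos (by norm_num)
  set τ : ℝ := 2 * Real.log (7/6) with hτdef
  set T' : ℝ := Real.log (4/3) + Real.log (7/6) with hT'def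
  have hτ0 : 0 ≤ τ := by positivity
  have hτT' : τ < T' := by rw [hτdef, hT'def]; linarith
  have hT'star : T' < 2 * Real.log (4/3) := by rw [hT'def]; linarith
  -- use hmax with the explicit solution
  have hTbig : ENNReal.ofReal T' ≤ T := by
    apply hmax T' (Ufun (u 0) (v 0)) (Vfun (u 0) (v 0))
    · simp [Ufun, rho_zero]
    · simp [Vfun, rho_zero]
    · intro t ht
      have htlt : t < 2 * Real.log (4/3) := lt_trans ht.2 hT'star
      exact ⟨Ufun_hasDeriv hinit htlt, Vfun_hasDeriv hinit htlt⟩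
  have hτT : ENNReal.ofReal τ < T :=
    lt_of_lt_of_le ((ENNReal.ofReal_lt_ofReal_iff_of_nonneg hτ0).mpr hτT') hTbig
  -- actual squared radius
  set r : ℝ → ℝ := fun t => u t ^ 2 + v t ^ 2 with hrdef
  have hdom : ∀ t ∈ Icc (0:ℝ) τ, ENNReal.ofReal t < T := fun t ht =>
    lt_of_le_of_lt (ENNReal.ofReal_le_ofReal ht.2) hτT
  have hr : ∀ t ∈ Icc (0:ℝ) τ, HasDerivAt r (2 * r t * (r t - 1/4)) t := by
    intro t ht
    have h1 := hu t ht.1 (hdom t ht)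
    have h2 := hv t ht.1 (hdom t ht)
    have := (h1.pow 2).add (h2.pow 2)
    refine this.congr_deriv ?_
    simp only [hrdef]
    ring
  have hτstar : τ < 2 * Real.log (4/3) := lt_trans hτT' hT'star
  have hstar : ∀ t ∈ Icc (0:ℝ) τ, t < 2 * Real.log (4/3) := fun t ht =>
    lt_of_le_of_lt ht.2 hτstar
  set D : ℝ → ℝ := fun t => r t - Rfun t with hDdef
  set k : ℝ → ℝ := fun t => 2 * (r t + Rfun t) - 1/2 with hkdef
  have hD : ∀ t ∈ Icc (0:ℝ) τ, HasDerivAt D (D t * k t) t := by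
    intro t ht
    have := (hr t ht).sub (Rfun_hasDeriv (hstar t ht))
    refine this.congr_deriv ?_
    simp only [hDdef, hkdef]
    ring
  have hDcont : ContinuousOn D (Icc 0 τ) := fun t ht =>
    ((hD t ht).continuousAt).continuousWithinAt
  have hkcont : ContinuousOn (fun t => |k t|) (Icc 0 τ) := by
    have h1 : ContinuousOn r (Icc 0 τ) := fun t ht =>
      ((hr t ht).continuousAt).continuousWithinAt
    have h2 : ContinuousOn Rfun (Icc 0 τ) := fun t ht =>
      ((Rfun_hasDeriv (hstar t ht)).continuousAt).continuousWithinAt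
    exact ((((h1.add h2).const_smul (2:ℝ)).sub continuousOn_const)).abs
  obtain ⟨t0, ht0, hKmax⟩ := isCompact_Icc.exists_isMaxOn (nonempty_Icc.mpr hτ0) hkcont
  set K : ℝ := |k t0| with hKdef
  have hgron := norm_le_gronwallBound_of_norm_deriv_right_le (f := D)
    (f' := fun t => D t * k t) (δ := 0) (K := K) (ε := 0) (a := 0) (b := τ)
    hDcont (fun x hx => (hD x (Ico_subset_Icc_self hx)).hasDerivWithinAt)
    (by
      have hD0 : D 0 = 0 := by
        show u 0 ^ 2 + v 0 ^ 2 - Rfun 0 = 0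
        rw [Rfun_zero]; linarith [hinit]
      simp [hD0])
    (by
      intro x hx
      have hb := hKmax (Ico_subset_Icc_self hx)
      simp only [Real.norm_eq_abs, abs_mul]
      calc |D x| * |k x| ≤ |D x| * K := by
            apply mul_le_mul_of_nonneg_left _ (abs_nonneg _)
            exact hb
        _ = K * |D x| + 0 := by ring)
  have hDτ := hgron τ (right_mem_Icc.mpr hτ0)
  rw [gronwallBound_ε0_δ0] at hDτ
  have hDτ0 : D τ = 0 := by
    have := norm_nonneg (D τ)
    have : ‖D τ‖ = 0 := le_antisymm hDτ (norm_nonneg _)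
    exact norm_eq_zero.mp this
  have hRτ : Rfun τ = 2 := by
    have hτ2 : τ / 2 = Real.log (7/6) := by rw [hτdef]; ring
    simp only [Rfun, Wfun, hτ2, Real.exp_log (show (0:ℝ) < 7/6 by norm_num)]
    norm_num
  refine ⟨τ, hτ0, hτT, ?_⟩
  have : r τ = 2 := by
    have := hDτ0
    simp only [hDdef, hRτ] at this
    linarith
  simp only [hrdef] at this
  linarith
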